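/- arXiv:1311.7113 — 4 statements merged into one kernel-verified Lean document; each statement's English description precedes it below -/
import Mathlib

section
/- Let M = {v_1^{m_1}, v_2^{m_2}, ..., v_ℓ^{m_ℓ}} be a multiset with distinct ranks v_1 < v_2 < ... < v_ℓ and multiplicities m_1, ..., m_ℓ, let n_0 = 0 and n_i = m_1 + ... + m_i, and for each i let θ_i be a permutation of the interval [n_{i-1}+1, n_i]. Then for every two multi-permutations σ, π ∈ S(M), the Kendall τ-distance is preserved under the substitution map T_θ: d_K(σ, π) = d_K(T_θ(σ), T_θ(π)). -/
/-- `AdjTrans σ π` : the sequence `π` is obtained from the sequence `σ` by exchanging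
two distinct adjacent elements (an adjacent transposition). -/
def AdjTrans (σ π : List ℤ) : Prop :=
  ∃ (l₁ l₂ : List ℤ) (a b : ℤ), a ≠ b ∧ σ = l₁ ++ a :: b :: l₂ ∧ π = l₁ ++ b :: a :: l₂

/-- `StepsTo n σ π` : `π` can be obtained from `σ` by a sequence of `n` adjacent
transpositions. -/
def StepsTo : ℕ → List ℤ → List ℤ → Prop
  | 0 => fun σ π => σ = π
  | n + 1 => fun σ π => ∃ τ, AdjTrans σ τ ∧ StepsTo n τ π

/-- The Kendall τ-distance between two sequences: the minimum number of adjacent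
transpositions needed to transform one into the other. -/
noncomputable def dK (σ π : List ℤ) : ℕ := sInf {n | StepsTo n σ π}

/-- The list `[a, a+1, ..., a+len-1]` of integers. -/
def rangeList (a len : ℕ) : List ℤ := (List.range' a len).map (fun x => (x : ℤ))

/-- The substitution map `T_θ`: the `r`-th occurrence (from the left, `0`-indexed) of a
rank `a` in `σ` is replaced by the `r`-th entry of the list `θ a`. -/
def Tmap (θ : ℤ → List ℤ) (σ : List ℤ) : List ℤ :=
  (List.range σ.length).map (fun j =>
    (θ (σ.getD j 0)).getD ((σ.take j).count (σ.getD j 0)) 0)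

/-- `psiEntry σ a s` : the number of positions in `σ` strictly to the right of the `s`-th
occurrence (`0`-indexed) of `a` in `σ` that hold an element smaller than `a`. -/
def psiEntry (σ : List ℤ) (a : ℤ) (s : ℕ) : ℕ :=
  (σ.drop (((σ.indexesOf a).getD s σ.length) + 1)).countP (fun x => decide (x < a))

/-- The Manhattan distance between two vectors of naturals (presented as lists). -/
def manhattanL (x y : List ℕ) : ℕ :=
  ∑ i ∈ Finset.range (max x.length y.length), ((x.getD i 0 : ℤ) - (y.getD i 0 : ℤ)).natAbs

/-- The Lee distance over `Z_q` between two vectors with entries in `{0, …, q-1}`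
(presented as lists). -/
def leeDistL (q : ℕ) (x y : List ℕ) : ℕ :=
  ∑ i ∈ Finset.range (max x.length y.length),
    min (((x.getD i 0 : ℤ) - (y.getD i 0 : ℤ)).natAbs)
      (q - ((x.getD i 0 : ℤ) - (y.getD i 0 : ℤ)).natAbs)

/-- The Lee distance between two vectors over `ZMod q`. -/
def zmodLee {q N : ℕ} (x y : Fin N → ZMod q) : ℕ :=
  ∑ i, min (x i - y i).val (y i - x i).val

/-- `permList k σ` : `σ` is (an ordering representing) a permutation of `{1, …, k}`. -/
def permList (k : ℕ) (σ : List ℤ) : Prop :=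
  (↑σ : Multiset ℤ) = (↑(rangeList 1 k) : Multiset ℤ)

/-- The multiset `M_{k,r} = {0^k, k+1, …, k+r}`. -/
def Mkr (k r : ℕ) : Multiset ℤ :=
  Multiset.replicate k (0 : ℤ) + (↑(rangeList (k + 1) r) : Multiset ℤ)

/-- `α_{↓k}` : delete from `α` all elements larger than `k`. -/
def restrictTo (k : ℕ) (α : List ℤ) : List ℤ :=
  α.filter (fun x => decide (x ≤ (k : ℤ)))

/-- `α_{k↦0}` : replace in `α` every element of `{1, …, k}` by `0`. -/
def mapToZero (k : ℕ) (α : List ℤ) : List ℤ :=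
  α.map (fun x => if 1 ≤ x ∧ x ≤ (k : ℤ) then 0 else x)

/-- `star σ ρ = σ ∗ ρ` : replace the zeros of `ρ`, from left to right, by the elements
of `σ` in order. -/
def starP : List ℤ → List ℤ → List ℤ
  | _, [] => []
  | σ, x :: ρ' => if x = 0 then σ.headD 0 :: starP σ.tail ρ' else x :: starP σ ρ'


section Aux

lemma tail_getD (l : List ℤ) (n : ℕ) : l.tail.getD n 0 = l.getD (n+1) 0 := by
  cases l <;> simp [List.getD]

lemma getD_zero_mem (l : List ℤ) (h : l ≠ []) : l.getD 0 0 ∈ l := by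
  cases l with
  | nil => exact absurd rfl h
  | cons x t => simp [List.getD]

lemma Tmap_cons (θ : ℤ → List ℤ) (a : ℤ) (s : List ℤ) :
    Tmap θ (a :: s) = (θ a).getD 0 0 :: Tmap (Function.update θ a (θ a).tail) s := by
  unfold Tmap
  simp only [List.length_cons, List.range_succ_eq_map, List.map_cons, List.map_map]
  refine congrArg₂ List.cons (by simp) ?_
  refine List.map_congr_left (fun j _ => ?_)
  simp only [Function.comp_apply, List.getD_cons_succ, List.take_succ_cons, List.count_cons]
  by_cases h : s.getD j 0 = a
  · rw [h]
    simp [Function.update_self, ← tail_getD]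
  · rw [Function.update_of_ne h]
    rw [if_neg (fun hh => h (by simpa using hh.symm : (a:ℤ) = s.getD j 0).symm)]
    simp

/-- Hypotheses on `θ` relative to a sequence. -/
def Good (θ : ℤ → List ℤ) (σ : List ℤ) : Prop :=
  (∀ a ∈ σ, σ.count a ≤ (θ a).length) ∧
  (∀ a ∈ σ, ∀ b ∈ σ, a ≠ b → ∀ x ∈ θ a, x ∉ θ b)

lemma Good.perm {θ σ τ} (h : Good θ σ) (hp : σ.Perm τ) : Good θ τ := by
  refine ⟨fun a ha => ?_, fun a ha b hb => h.2 a (hp.mem_iff.mpr ha) b (hp.mem_iff.mpr hb)⟩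
  rw [← hp.count_eq]
  exact h.1 a (hp.mem_iff.mpr ha)

lemma update_subset (θ : ℤ → List ℤ) (h : ℤ) :
    ∀ z x, x ∈ Function.update θ h (θ h).tail z → x ∈ θ z := by
  intro z x hx
  by_cases hz : z = h
  · subst hz; rw [Function.update_self] at hx; exact List.mem_of_mem_tail hx
  · rwa [Function.update_of_ne hz] at hx

lemma Good.step {θ : ℤ → List ℤ} {h : ℤ} {s : List ℤ} (hg : Good θ (h :: s)) :
    Good (Function.update θ h (θ h).tail) s := by
  constructor
  · intro a ha
    by_cases hah : a = h
    · subst hah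
      have h1 : s.count a + 1 ≤ (θ a).length := by
        have := hg.1 a (List.mem_cons_self (a := a) (l := s))
        simpa [List.count_cons] using this
      rw [Function.update_self, List.length_tail]
      omega
    · rw [Function.update_of_ne hah]
      have := hg.1 a (List.mem_cons_of_mem h ha)
      have hc : s.count a ≤ (h :: s).count a := by simp [List.count_cons]
      omega
  · intro a ha b hb hab x hx hxb
    exact hg.2 a (List.mem_cons_of_mem h ha) b (List.mem_cons_of_mem h hb) hab x
      (update_subset θ h a x hx) (update_subset θ h b x hxb)

lemma AdjTrans.perm {σ π : List ℤ} (h : AdjTrans σ π) : σ.Perm π := by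
  obtain ⟨l₁, l₂, a, b, _, h1, h2⟩ := h
  subst h1; subst h2
  exact List.Perm.append_left l₁ (List.Perm.swap b a l₂)

lemma AdjTrans.cons {σ π : List ℤ} (x : ℤ) (h : AdjTrans σ π) :
    AdjTrans (x :: σ) (x :: π) := by
  obtain ⟨l₁, l₂, a, b, hab, h1, h2⟩ := h
  exact ⟨x :: l₁, l₂, a, b, hab, by simp [h1], by simp [h2]⟩

lemma theta_ne_nil {θ : ℤ → List ℤ} {σ : List ℤ} (hg : Good θ σ) {a : ℤ} (ha : a ∈ σ) :
    θ a ≠ [] := by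
  intro hnil
  have := hg.1 a ha
  rw [hnil] at this
  simp at this
  exact (List.count_pos_iff.mpr ha).ne' (by omega)

lemma adj_Tmap {a b : ℤ} (hab : a ≠ b) :
    ∀ (l₁ : List ℤ) (θ : ℤ → List ℤ) (l₂ : List ℤ), Good θ (l₁ ++ a :: b :: l₂) →
    AdjTrans (Tmap θ (l₁ ++ a :: b :: l₂)) (Tmap θ (l₁ ++ b :: a :: l₂)) := by
  intro l₁
  induction l₁ with
  | nil =>
    intro θ l₂ hg
    simp only [List.nil_append]
    rw [Tmap_cons, Tmap_cons, Tmap_cons, Tmap_cons]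
    rw [Function.update_of_ne hab.symm, Function.update_of_ne hab]
    rw [Function.update_comm hab]
    have ha : a ∈ a :: b :: l₂ := List.mem_cons_self (a := a) (l := _)
    have hb : b ∈ a :: b :: l₂ := List.mem_cons_of_mem a (List.mem_cons_self (a := b) (l := _))
    have hx : (θ a).getD 0 0 ∈ θ a := getD_zero_mem _ (theta_ne_nil hg ha)
    have hy : (θ b).getD 0 0 ∈ θ b := getD_zero_mem _ (theta_ne_nil hg hb)
    have hxy : (θ a).getD 0 0 ≠ (θ b).getD 0 0 := by
      intro he
      exact hg.2 a ha b hb hab _ hx (he ▸ hy)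
    exact ⟨[], _, _, _, hxy, rfl, rfl⟩
  | cons h t ih =>
    intro θ l₂ hg
    simp only [List.cons_append]
    rw [Tmap_cons, Tmap_cons]
    exact AdjTrans.cons _ (ih _ l₂ (Good.step (by simpa using hg)))

lemma stepsTo_Tmap {θ : ℤ → List ℤ} :
    ∀ (n : ℕ) (σ π : List ℤ), Good θ σ → StepsTo n σ π →
    StepsTo n (Tmap θ σ) (Tmap θ π) := by
  intro n
  induction n with
  | zero => intro σ π _ h; exact congrArg _ h
  | succ n ih =>
    rintro σ π hg ⟨τ, hadj, hst⟩
    refine ⟨Tmap θ τ, ?_, ih τ π (hg.perm hadj.perm) hst⟩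
    obtain ⟨l₁, l₂, a, b, hab, h1, h2⟩ := hadj
    subst h1; subst h2
    exact adj_Tmap hab l₁ θ l₂ hg

/-- Collapsing condition. -/
def Coll (c : ℤ → ℤ) (θ : ℤ → List ℤ) (σ : List ℤ) : Prop :=
  ∀ a ∈ σ, σ.count a ≤ (θ a).length ∧ ∀ x ∈ θ a, c x = a

lemma Coll.step {c θ} {h : ℤ} {s : List ℤ} (hc : Coll c θ (h :: s)) :
    Coll c (Function.update θ h (θ h).tail) s := by
  intro a ha
  constructor
  · by_cases hah : a = h
    · subst hah
      have h1 : s.count a + 1 ≤ (θ a).length := by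
        have := (hc a (List.mem_cons_self (a := a) (l := s))).1
        simpa [List.count_cons] using this
      rw [Function.update_self, List.length_tail]
      omega
    · rw [Function.update_of_ne hah]
      have := (hc a (List.mem_cons_of_mem h ha)).1
      have hc2 : s.count a ≤ (h :: s).count a := by simp [List.count_cons]
      omega
  · intro x hx
    exact (hc a (List.mem_cons_of_mem h ha)).2 x (update_subset θ h a x hx)

lemma map_Tmap {c : ℤ → ℤ} : ∀ (σ : List ℤ) (θ : ℤ → List ℤ), Coll c θ σ →
    (Tmap θ σ).map c = σ := by
  intro σ
  induction σ with
  | nil => intro θ _; rfl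
  | cons h s ih =>
    intro θ hc
    rw [Tmap_cons, List.map_cons, ih _ hc.step]
    congr 1
    have hne : θ h ≠ [] := by
      intro hnil
      have := (hc h (List.mem_cons_self (a := h) (l := s))).1
      rw [hnil] at this
      simp [List.count_cons] at this
    exact (hc h (List.mem_cons_self (a := h) (l := s))).2 _ (getD_zero_mem _ hne)

lemma mapSteps (c : ℤ → ℤ) :
    ∀ (n : ℕ) (x y : List ℤ), StepsTo n x y →
    ∃ m ≤ n, StepsTo m (x.map c) (y.map c) := by
  intro n
  induction n with
  | zero => intro x y h; exact ⟨0, le_refl _, congrArg _ h⟩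
  | succ n ih =>
    rintro x y ⟨τ, ⟨l₁, l₂, a, b, hab, h1, h2⟩, hst⟩
    obtain ⟨m, hm, hsteps⟩ := ih τ y hst
    by_cases h : c a = c b
    · refine ⟨m, le_trans hm (Nat.le_succ n), ?_⟩
      have : x.map c = τ.map c := by rw [h1, h2]; simp [h]
      rwa [this]
    · exact ⟨m + 1, Nat.succ_le_succ hm,
        ⟨τ.map c, ⟨l₁.map c, l₂.map c, c a, c b, h, by simp [h1], by simp [h2]⟩, hsteps⟩⟩

lemma rangeList_eq (a len : ℕ) :
    rangeList a len = List.map (fun x : ℕ => (x:ℤ)) (List.range' a len) := by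
  simp [rangeList, List.flatMap_def, List.flatten_eq_nil_iff]
  induction (List.range' a len) with
  | nil => rfl
  | cons h t ih => simp_all

lemma mem_rangeList {a len : ℕ} {x : ℤ} :
    x ∈ rangeList a len ↔ (a:ℤ) ≤ x ∧ x < a + len := by
  rw [rangeList_eq, List.mem_map]
  constructor
  · rintro ⟨k, hk, rfl⟩
    rw [List.mem_range'_1] at hk
    exact ⟨by exact_mod_cast hk.1, by exact_mod_cast hk.2⟩
  · rintro ⟨h1, h2⟩
    exact ⟨x.toNat, List.mem_range'_1.mpr ⟨by omega, by omega⟩, by omega⟩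

lemma length_rangeList (a len : ℕ) : (rangeList a len).length = len := by
  rw [rangeList_eq, List.length_map, List.length_range']

end Aux

/-- Lemma 1. Let `M = {v 0 ^ m 0, …, v (ℓ-1) ^ m (ℓ-1)}` be a multiset with
distinct ranks `v 0 < v 1 < … < v (ℓ-1)` and positive multiplicities, and for each `i < ℓ`
let `θ (v i)` be a permutation of the interval `[n_{i-1}+1, n_i]` (where `n_i` is the sum of
the first `i` multiplicities).  Then for every two multi-permutations `σ, π ∈ S(M)`,
`d_K(σ, π) = d_K(T_θ(σ), T_θ(π))`. -/
theorem stmt0 (ℓ : ℕ) (v : ℕ → ℤ) (m : ℕ → ℕ)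
    (hv : ∀ i j, i < j → j < ℓ → v i < v j)
    (hm : ∀ i, i < ℓ → 0 < m i)
    (θ : ℤ → List ℤ)
    (hθ : ∀ i, i < ℓ → (↑(θ (v i)) : Multiset ℤ) =
      (↑(rangeList ((∑ j ∈ Finset.range i, m j) + 1) (m i)) : Multiset ℤ))
    (σ π : List ℤ)
    (hσ : (↑σ : Multiset ℤ) = ∑ i ∈ Finset.range ℓ, Multiset.replicate (m i) (v i))
    (hπ : (↑π : Multiset ℤ) = ∑ i ∈ Finset.range ℓ, Multiset.replicate (m i) (v i)) :
    dK σ π = dK (Tmap θ σ) (Tmap θ π) := by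
  classical
  set M : Multiset ℤ := ∑ i ∈ Finset.range ℓ, Multiset.replicate (m i) (v i) with hM
  set N : ℕ → ℕ := fun i => ∑ j ∈ Finset.range i, m j with hN
  have vne : ∀ i j, i < ℓ → j < ℓ → i ≠ j → v i ≠ v j := by
    intro i j hi hj hij
    rcases lt_or_gt_of_ne hij with h | h
    · exact (hv i j h hj).ne
    · exact (hv j i h hi).ne'
  have hlen : ∀ i, i < ℓ → (θ (v i)).length = m i := by
    intro i hi
    have := congrArg Multiset.card (hθ i hi)
    simpa [length_rangeList] using this
  have hmemθ : ∀ i, i < ℓ → ∀ x : ℤ, x ∈ θ (v i) ↔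
      ((N i : ℤ) + 1 ≤ x ∧ x < (N i : ℤ) + 1 + m i) := by
    intro i hi x
    have : x ∈ θ (v i) ↔ x ∈ rangeList (N i + 1) (m i) := by
      rw [← Multiset.mem_coe, hθ i hi, Multiset.mem_coe]
    rw [this, mem_rangeList]
    push_cast
    tauto
  have hNle : ∀ i j, i < j → N i + m i ≤ N j := by
    intro i j h
    have : N i + m i = N (i+1) := (Finset.sum_range_succ m i).symm
    rw [this]
    exact Finset.sum_le_sum_of_subset (Finset.range_subset_range.mpr h)
  have hdisj : ∀ i j, i < ℓ → j < ℓ → i ≠ j → ∀ x ∈ θ (v i), x ∉ θ (v j) := by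
    intro i j hi hj hij x hx hxj
    rw [hmemθ i hi] at hx
    rw [hmemθ j hj] at hxj
    rcases lt_or_gt_of_ne hij with h | h
    · have := hNle i j h; omega
    · have := hNle j i h; omega
  have hmemM : ∀ (ρ : List ℤ), (↑ρ : Multiset ℤ) = M → ∀ a, a ∈ ρ ↔ ∃ i, i < ℓ ∧ a = v i := by
    intro ρ hρ a
    rw [← Multiset.mem_coe, hρ, hM, Multiset.mem_sum]
    constructor
    · rintro ⟨i, hi, hmem⟩
      rw [Multiset.mem_replicate] at hmem
      exact ⟨i, Finset.mem_range.mp hi, hmem.2⟩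
    · rintro ⟨i, hi, rfl⟩
      exact ⟨i, Finset.mem_range.mpr hi, Multiset.mem_replicate.mpr ⟨(hm i hi).ne', rfl⟩⟩
  have hcnt : ∀ (ρ : List ℤ), (↑ρ : Multiset ℤ) = M → ∀ i, i < ℓ → ρ.count (v i) = m i := by
    intro ρ hρ i hi
    have h1 : ρ.count (v i) = Multiset.count (v i) (↑ρ : Multiset ℤ) := by
      simp [Multiset.coe_count]
    rw [h1, hρ, hM, Multiset.count_sum']
    rw [Finset.sum_eq_single i]
    · simp [Multiset.count_replicate]
    · intro j hj hji
      rw [Multiset.count_replicate, if_neg (vne j i (Finset.mem_range.mp hj) hi hji)]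
    · intro h
      exact absurd (Finset.mem_range.mpr hi) h
  -- the collapsing map
  let c : ℤ → ℤ := fun x =>
    if h : ∃ i, i < ℓ ∧ x ∈ θ (v i) then v (Classical.choose h) else x
  have hc : ∀ i, i < ℓ → ∀ x ∈ θ (v i), c x = v i := by
    intro i hi x hx
    have hex : ∃ j, j < ℓ ∧ x ∈ θ (v j) := ⟨i, hi, hx⟩
    have hcx : c x = v (Classical.choose hex) := by
      show (if h : ∃ i, i < ℓ ∧ x ∈ θ (v i) then v (Classical.choose h) else x)
        = v (Classical.choose hex)
      rw [dif_pos hex]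
    rw [hcx]
    obtain ⟨hj1, hj2⟩ := Classical.choose_spec hex
    by_contra hne
    have hji : Classical.choose hex ≠ i := fun h => hne (by rw [h])
    exact hdisj _ i hj1 hi hji x hj2 hx
  have hGood : ∀ (ρ : List ℤ), (↑ρ : Multiset ℤ) = M → Good θ ρ := by
    intro ρ hρ
    constructor
    · intro a ha
      obtain ⟨i, hi, rfl⟩ := (hmemM ρ hρ a).mp ha
      rw [hcnt ρ hρ i hi, hlen i hi]
    · intro a ha b hb hab x hx
      obtain ⟨i, hi, rfl⟩ := (hmemM ρ hρ a).mp ha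
      obtain ⟨j, hj, rfl⟩ := (hmemM ρ hρ b).mp hb
      have hij : i ≠ j := fun h => hab (by rw [h])
      exact hdisj i j hi hj hij x hx
  have hColl : ∀ (ρ : List ℤ), (↑ρ : Multiset ℤ) = M → Coll c θ ρ := by
    intro ρ hρ a ha
    obtain ⟨i, hi, rfl⟩ := (hmemM ρ hρ a).mp ha
    refine ⟨by rw [hcnt ρ hρ i hi, hlen i hi], fun x hx => hc i hi x hx⟩
  have hmapσ : (Tmap θ σ).map c = σ := map_Tmap σ θ (hColl σ hσ)
  have hmapπ : (Tmap θ π).map c = π := map_Tmap π θ (hColl π hπ)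
  have hs : ∀ n, StepsTo n σ π → StepsTo n (Tmap θ σ) (Tmap θ π) :=
    fun n hn => stepsTo_Tmap n σ π (hGood σ hσ) hn
  unfold dK
  by_cases h1 : {n | StepsTo n σ π}.Nonempty
  · have h2 : {n | StepsTo n (Tmap θ σ) (Tmap θ π)}.Nonempty :=
      ⟨h1.choose, hs _ h1.choose_spec⟩
    apply le_antisymm
    · obtain ⟨mm, hm', hst⟩ := mapSteps c _ _ _ (Nat.sInf_mem h2)
      rw [hmapσ, hmapπ] at hst
      exact le_trans (Nat.sInf_le hst) hm'
    · exact Nat.sInf_le (hs _ (Nat.sInf_mem h1))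
  · have h2 : ¬ {n | StepsTo n (Tmap θ σ) (Tmap θ π)}.Nonempty := by
      rintro ⟨n, hn⟩
      obtain ⟨mm, _, hst⟩ := mapSteps c n _ _ hn
      rw [hmapσ, hmapπ] at hst
      exact h1 ⟨mm, hst⟩
    rw [Set.not_nonempty_iff_eq_empty] at h1 h2
    rw [h1, h2]
end

section
/- If σ, π, and ρ are three multi-permutations in S(M), then d_K(σ, π) + d_K(π, ρ) ≡ d_K(σ, ρ) (mod 2). -/
/-- Inversion count of a list. -/
def inv' : List ℤ → ℕ
  | [] => 0
  | a :: l => l.countP (fun x => decide (x < a)) + inv' l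

lemma inv'_append (l₁ : List ℤ) : ∀ t1 t2 : List ℤ, t1.Perm t2 →
    inv' (l₁ ++ t1) + inv' t2 = inv' (l₁ ++ t2) + inv' t1 := by
  induction l₁ with
  | nil => intro t1 t2 _; simp [Nat.add_comm]
  | cons x l ih =>
    intro t1 t2 hp
    simp only [List.cons_append, inv', List.countP_append, List.append_eq]
    have h1 : t1.countP (fun y => decide (y < x)) = t2.countP (fun y => decide (y < x)) :=
      hp.countP_eq _
    have := ih t1 t2 hp
    omega

lemma adjTrans_parity {σ π : List ℤ} (h : AdjTrans σ π) : (inv' σ + inv' π) % 2 = 1 := by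
  obtain ⟨l₁, l₂, a, b, hab, hσ, hπ⟩ := h
  subst hσ; subst hπ
  have hperm : (a :: b :: l₂).Perm (b :: a :: l₂) := List.Perm.swap _ _ _
  have key := inv'_append l₁ (a :: b :: l₂) (b :: a :: l₂) hperm
  have e1 : inv' (a :: b :: l₂) =
      (if b < a then 1 else 0) + l₂.countP (fun x => decide (x < a)) +
        (l₂.countP (fun x => decide (x < b)) + inv' l₂) := by
    simp only [inv', List.countP_cons]
    split <;> simp_all <;> omega
  have e2 : inv' (b :: a :: l₂) =
      (if a < b then 1 else 0) + l₂.countP (fun x => decide (x < b)) +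
        (l₂.countP (fun x => decide (x < a)) + inv' l₂) := by
    simp only [inv', List.countP_cons]
    split <;> simp_all <;> omega
  have hlt : (if b < a then (1:ℕ) else 0) + (if a < b then 1 else 0) = 1 := by
    rcases lt_or_gt_of_ne hab with h | h <;> simp [h, not_lt_of_gt h]
  omega

lemma stepsTo_parity : ∀ (n : ℕ) (σ π : List ℤ), StepsTo n σ π →
    (n + inv' σ + inv' π) % 2 = 0 := by
  intro n
  induction n with
  | zero => intro σ π h; cases h; omega
  | succ n ih =>
    intro σ π h
    obtain ⟨τ, hadj, hst⟩ := h
    have h1 := adjTrans_parity hadj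
    have h2 := ih τ π hst
    omega

lemma stepsTo_trans : ∀ (m n : ℕ) (σ τ π : List ℤ), StepsTo m σ τ → StepsTo n τ π →
    StepsTo (m + n) σ π := by
  intro m
  induction m with
  | zero => intro n σ τ π h1 h2; cases h1; simpa using h2
  | succ m ih =>
    intro n σ τ π h1 h2
    obtain ⟨τ', hadj, hst⟩ := h1
    rw [Nat.add_right_comm]
    exact ⟨τ', hadj, ih n τ' τ π hst h2⟩

lemma stepsTo_cons : ∀ (n : ℕ) (σ π : List ℤ) (x : ℤ), StepsTo n σ π →
    StepsTo n (x :: σ) (x :: π) := by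
  intro n
  induction n with
  | zero => intro σ π x h; cases h; rfl
  | succ n ih =>
    intro σ π x h
    obtain ⟨τ, ⟨l₁, l₂, a, b, hab, h1, h2⟩, hst⟩ := h
    exact ⟨x :: τ, ⟨x :: l₁, l₂, a, b, hab, by simp [h1], by simp [h2]⟩, ih τ π x hst⟩

lemma move_front : ∀ (l₁ : List ℤ) (l₂ : List ℤ) (h : ℤ), h ∉ l₁ →
    StepsTo l₁.length (l₁ ++ h :: l₂) (h :: (l₁ ++ l₂)) := by
  intro l₁
  induction l₁ with
  | nil => intro l₂ h _; rfl
  | cons x l ih =>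
    intro l₂ h hmem
    have hx : h ≠ x := fun hx => hmem (hx ▸ List.mem_cons_self (a := x) (l := l))
    have h1 : StepsTo l.length (x :: (l ++ h :: l₂)) (x :: h :: (l ++ l₂)) :=
      stepsTo_cons _ _ _ x (ih l₂ h (fun hm => hmem (List.mem_cons_of_mem x hm)))
    have h2 : StepsTo 1 (x :: h :: (l ++ l₂)) (h :: x :: (l ++ l₂)) :=
      ⟨h :: x :: (l ++ l₂), ⟨[], l ++ l₂, x, h, fun he => hx he.symm, rfl, rfl⟩, rfl⟩
    simpa using stepsTo_trans l.length 1 _ _ _ h1 h2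

lemma split_first {h : ℤ} : ∀ {σ : List ℤ}, h ∈ σ → ∃ l₁ l₂, σ = l₁ ++ h :: l₂ ∧ h ∉ l₁ := by
  intro σ
  induction σ with
  | nil => intro hm; cases hm
  | cons x l ih =>
    intro hm
    by_cases hx : h = x
    · exact ⟨[], l, by simp [hx], by simp⟩
    · rcases List.mem_cons.mp hm with he | hl
      · exact absurd he hx
      · obtain ⟨l₁, l₂, heq, hni⟩ := ih hl
        exact ⟨x :: l₁, l₂, by simp [heq], by simp [hni, Ne.symm (fun he => hx he.symm)]⟩

lemma reach : ∀ (π σ : List ℤ), σ.Perm π → ∃ n, StepsTo n σ π := by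
  intro π
  induction π with
  | nil => intro σ hp; exact ⟨0, List.Perm.eq_nil hp⟩
  | cons h π' ih =>
    intro σ hp
    have hm : h ∈ σ := hp.mem_iff.mpr (List.mem_cons_self (a := h) (l := π'))
    obtain ⟨l₁, l₂, heq, hni⟩ := split_first hm
    have hperm : (l₁ ++ l₂).Perm π' := by
      have : (l₁ ++ h :: l₂).Perm (h :: (l₁ ++ l₂)) := List.perm_middle
      exact (List.Perm.cons_inv ((heq ▸ hp).symm.trans this).symm)
    obtain ⟨m, hm'⟩ := ih (l₁ ++ l₂) hperm
    refine ⟨l₁.length + m, ?_⟩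
    have h1 : StepsTo l₁.length σ (h :: (l₁ ++ l₂)) := heq ▸ move_front l₁ l₂ h hni
    exact stepsTo_trans _ _ _ _ _ h1 (stepsTo_cons m _ _ h hm')

lemma dK_parity {σ π : List ℤ} (hp : σ.Perm π) :
    (dK σ π + inv' σ + inv' π) % 2 = 0 := by
  have hne : {n | StepsTo n σ π}.Nonempty := reach π σ hp
  have hmem := Nat.sInf_mem hne
  exact stepsTo_parity _ _ _ hmem

/-- Lemma 3. If `σ`, `π`, and `ρ` are three multi-permutations in `S(M)`,
then `d_K(σ, π) + d_K(π, ρ) ≡ d_K(σ, ρ) (mod 2)`. -/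
theorem stmt2 (M : Multiset ℤ) (σ π ρ : List ℤ)
    (hσ : (↑σ : Multiset ℤ) = M) (hπ : (↑π : Multiset ℤ) = M) (hρ : (↑ρ : Multiset ℤ) = M) :
    (dK σ π + dK π ρ) % 2 = dK σ ρ % 2 := by
  have h1 : σ.Perm π := Multiset.coe_eq_coe.mp (hσ.trans hπ.symm)
  have h2 : π.Perm ρ := Multiset.coe_eq_coe.mp (hπ.trans hρ.symm)
  have h3 : σ.Perm ρ := h1.trans h2
  have p1 := dK_parity h1
  have p2 := dK_parity h2
  have p3 := dK_parity h3
  omega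
end

section
/- Let M = {v_1^{m_1}, ..., v_ℓ^{m_ℓ}} be a multiset with distinct ranks v_1 < ... < v_ℓ, let n_0 = 0 and n_i = m_1 + ... + m_i. The mapping ψ : S(M) → [Z]^M is bijective. -/
/-- recursive characterization of psiEntry -/
def pe (a : ℤ) : List ℤ → ℕ → ℕ
  | [], _ => 0
  | x :: t, s => if x = a then
      (match s with
       | 0 => t.countP (fun y => decide (y < a))
       | s + 1 => pe a t s)
    else pe a t s

lemma getD_map_add_one (l : List ℕ) (s n : ℕ) :
    (l.map (· + 1)).getD s (n + 1) = l.getD s n + 1 := by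
  induction l generalizing s with
  | nil => simp [List.getD]
  | cons h t ih =>
    cases s with
    | zero => simp
    | succ s => simpa using ih s

lemma psiEntry_eq_pe (a : ℤ) (σ : List ℤ) (s : ℕ) : psiEntry σ a s = pe a σ s := by
  induction σ generalizing s with
  | nil => simp [psiEntry, pe, List.getD]
  | cons x t ih =>
    unfold psiEntry
    rw [List.indexesOf, List.idxsOf_cons, List.idxsOf_start, Nat.zero_add]
    by_cases hx : x = a
    · simp only [hx, beq_self_eq_true, cond_true, if_true]
      cases s with
      | zero => simp [pe, hx]
      | succ s =>
        simp only [List.getD_cons_succ]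
        rw [show (a :: t).length = t.length + 1 from rfl, getD_map_add_one]
        simp only [pe, eq_self_iff_true, if_true, if_pos trivial]
        rw [← ih s]
        rfl
    · have : (x == a) = false := by simpa using hx
      simp only [this, cond_false, Bool.false_eq_true, if_false]
      rw [show (x :: t).length = t.length + 1 from rfl, getD_map_add_one]
      simp only [pe, if_neg hx]
      rw [← ih s]
      rfl

lemma pe_le_countP (a : ℤ) (σ : List ℤ) (s : ℕ) :
    pe a σ s ≤ σ.countP (fun y => decide (y < a)) := by
  induction σ generalizing s with
  | nil => simp [pe]
  | cons x t ih =>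
    by_cases hx : x = a
    · cases s with
      | zero =>
        simp only [pe, hx, if_pos trivial, eq_self_iff_true, if_true]
        rw [List.countP_cons]
        omega
      | succ s =>
        simp only [pe, hx, eq_self_iff_true, if_true]
        rw [List.countP_cons]
        have := ih s
        omega
    · simp only [pe, if_neg hx]
      rw [List.countP_cons]
      have := ih s
      omega

lemma pe_succ_le (a : ℤ) (σ : List ℤ) (s : ℕ) : pe a σ (s + 1) ≤ pe a σ s := by
  induction σ generalizing s with
  | nil => simp [pe]
  | cons x t ih =>
    by_cases hx : x = a
    · cases s with
      | zero =>
        simp only [pe, hx, eq_self_iff_true, if_true]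
        exact pe_le_countP a t 0
      | succ s =>
        simp only [pe, hx, eq_self_iff_true, if_true]
        exact ih s
    · simp only [pe, if_neg hx]
      exact ih s

lemma pe_antitone (a : ℤ) (σ : List ℤ) {s₁ s₂ : ℕ} (h : s₁ ≤ s₂) : pe a σ s₂ ≤ pe a σ s₁ := by
  induction s₂ with
  | zero =>
    have : s₁ = 0 := by omega
    subst this; rfl
  | succ n ih =>
    rcases Nat.lt_or_ge s₁ (n+1) with h'|h'
    · exact le_trans (pe_succ_le a σ n) (ih (by omega))
    · have : s₁ = n + 1 := by omega
      subst this; rfl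

lemma countP_lt_filter (a : ℤ) (p : ℤ → Bool) (t : List ℤ)
    (h : ∀ x ∈ t, p x = false → ¬ x < a) :
    (t.filter p).countP (fun y => decide (y < a)) = t.countP (fun y => decide (y < a)) := by
  induction t with
  | nil => simp
  | cons x t ih =>
    have ih' := ih (fun y hy => h y (List.mem_cons_of_mem _ hy))
    by_cases hp : p x
    · rw [List.filter_cons_of_pos hp, List.countP_cons, List.countP_cons, ih']
    · rw [List.filter_cons_of_neg (by simpa using hp), List.countP_cons, ih']
      have : ¬ x < a := h x (List.mem_cons_self) (by simpa using hp)
      simp [this]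

lemma pe_filter (a : ℤ) (p : ℤ → Bool) (σ : List ℤ) (s : ℕ)
    (h : ∀ x ∈ σ, p x = false → x ≠ a ∧ ¬ x < a) :
    pe a (σ.filter p) s = pe a σ s := by
  induction σ generalizing s with
  | nil => simp
  | cons x t ih =>
    have ih' : ∀ s, pe a (t.filter p) s = pe a t s :=
      fun s => ih s (fun y hy => h y (List.mem_cons_of_mem _ hy))
    by_cases hp : p x
    · rw [List.filter_cons_of_pos hp]
      by_cases hx : x = a
      · cases s with
        | zero =>
          simp only [pe, hx, eq_self_iff_true, if_true, if_pos trivial]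
          exact countP_lt_filter a p t (fun y hy hpy => (h y (List.mem_cons_of_mem _ hy) hpy).2)
        | succ s => simp only [pe, hx, eq_self_iff_true, if_true]; exact ih' s
      · simp only [pe, if_neg hx]; exact ih' s
    · rw [List.filter_cons_of_neg (by simpa using hp)]
      have hx : x ≠ a := (h x (List.mem_cons_self) (by simpa using hp)).1
      rw [ih' s]
      simp [pe, if_neg hx]

/-- Insert occurrences of `v` into `τ`: the `s`-th inserted `v` gets `cs[s]` elements of `τ`
to its right. Counts must be non-increasing. -/
def ins (v : ℤ) : List ℕ → List ℤ → List ℤ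
  | [], τ => τ
  | c :: cs, τ =>
    if τ.length ≤ c then v :: ins v cs τ
    else τ.headD 0 :: ins v (c :: cs) τ.tail
termination_by cs τ => cs.length + τ.length
decreasing_by
  · simp
  · simp only [List.length_cons]
    have : τ.length ≠ 0 := by omega
    have : τ.tail.length = τ.length - 1 := List.length_tail
    omega

lemma ins_perm (v : ℤ) (cs : List ℕ) (τ : List ℤ) :
    (ins v cs τ).Perm (List.replicate cs.length v ++ τ) := by
  induction cs, τ using ins.induct with
  | case1 τ => simp [ins]
  | case2 c cs τ h ih =>
    rw [ins, if_pos h]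
    simpa [List.replicate_succ] using ih.cons v
  | case3 c cs τ h ih =>
    rw [ins, if_neg h]
    have hτ : τ ≠ [] := by
      intro hh; subst hh; simp at h
    obtain ⟨x, t, rfl⟩ := List.exists_cons_of_ne_nil hτ
    simp only [List.headD_cons, List.tail_cons] at ih ⊢
    exact (ih.cons x).trans (List.perm_middle.symm)

lemma pe_eq_zero_of_not_mem {a : ℤ} {σ : List ℤ} (h : a ∉ σ) (s : ℕ) : pe a σ s = 0 := by
  induction σ generalizing s with
  | nil => simp [pe]
  | cons x t ih =>
    have hx : x ≠ a := by rintro rfl; exact h (List.mem_cons_self)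
    simp only [pe, if_neg hx]
    exact ih (fun hh => h (List.mem_cons_of_mem _ hh)) s

lemma countP_ins (p : ℤ → Bool) (v : ℤ) (cs : List ℕ) (τ : List ℤ) :
    (ins v cs τ).countP p = (List.replicate cs.length v).countP p + τ.countP p := by
  rw [(ins_perm v cs τ).countP_eq, List.countP_append]

lemma pe_ins_lt (a v : ℤ) (hav : a < v) (cs : List ℕ) (τ : List ℤ) (s : ℕ) :
    pe a (ins v cs τ) s = pe a τ s := by
  induction cs, τ using ins.induct generalizing s with
  | case1 τ => rw [ins]
  | case2 c cs τ h ih =>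
    rw [ins, if_pos h]
    have hv : v ≠ a := by omega
    simp only [pe, if_neg hv]
    exact ih _
  | case3 c cs τ h ih =>
    rw [ins, if_neg h]
    have hτ : τ ≠ [] := by intro hh; subst hh; simp at h
    obtain ⟨x, t, rfl⟩ := List.exists_cons_of_ne_nil hτ
    simp only [List.headD_cons, List.tail_cons] at ih ⊢
    by_cases hx : x = a
    · cases s with
      | zero =>
        simp only [pe, hx, eq_self_iff_true, if_true, if_pos trivial]
        rw [countP_ins]
        have : (List.replicate (c :: cs).length v).countP (fun y => decide (y < a)) = 0 := by
          rw [List.countP_eq_zero]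
          intro y hy
          rw [List.eq_of_mem_replicate hy]
          simp; omega
        omega
      | succ s => simp only [pe, hx, eq_self_iff_true, if_true]; exact ih _
    · simp only [pe, if_neg hx]; exact ih _

lemma pe_ins_self (v : ℤ) (cs : List ℕ) (τ : List ℤ)
    (hτ : ∀ x ∈ τ, x < v) (hb : ∀ c ∈ cs, c ≤ τ.length)
    (hmono : cs.Pairwise (· ≥ ·)) (s : ℕ) :
    pe v (ins v cs τ) s = cs.getD s 0 := by
  induction cs, τ using ins.induct generalizing s with
  | case1 τ =>
    rw [ins]
    have : v ∉ τ := fun hh => absurd (hτ v hh) (lt_irrefl v)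
    simp [pe_eq_zero_of_not_mem this, List.getD]
  | case2 c cs τ h ih =>
    rw [ins, if_pos h]
    cases s with
    | zero =>
      simp only [pe, eq_self_iff_true, if_true, if_pos trivial, List.getD_cons_zero]
      rw [countP_ins]
      have h1 : (List.replicate cs.length v).countP (fun y => decide (y < v)) = 0 := by
        rw [List.countP_eq_zero]
        intro y hy
        rw [List.eq_of_mem_replicate hy]
        simp
      have h2 : τ.countP (fun y => decide (y < v)) = τ.length := by
        rw [List.countP_eq_length]
        intro y hy
        simpa using hτ y hy
      have h3 : c ≤ τ.length := hb c (List.mem_cons_self)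
      omega
    | succ s =>
      simp only [pe, eq_self_iff_true, if_true, List.getD_cons_succ]
      exact ih hτ (fun c' hc' => hb c' (List.mem_cons_of_mem _ hc'))
        (List.Pairwise.of_cons hmono) s
  | case3 c cs τ h ih =>
    rw [ins, if_neg h]
    have hτne : τ ≠ [] := by intro hh; subst hh; simp at h
    obtain ⟨x, t, rfl⟩ := List.exists_cons_of_ne_nil hτne
    simp only [List.headD_cons, List.tail_cons] at ih ⊢
    have hx : x ≠ v := by
      have := hτ x (List.mem_cons_self); omega
    simp only [pe, if_neg hx]
    refine ih (fun y hy => hτ y (List.mem_cons_of_mem _ hy)) ?_ hmono s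
    intro c' hc'
    rcases List.mem_cons.mp hc' with rfl | hc'
    · simp at h; omega
    · have h1 : c ≥ c' := (List.pairwise_cons.mp hmono).1 c' hc'
      simp at h; omega

lemma ins_reconstruct (v : ℤ) (σ : List ℤ) (h : ∀ x ∈ σ, x ≤ v) :
    ins v ((List.range (σ.count v)).map (pe v σ)) (σ.filter (fun x => decide (x < v))) = σ := by
  induction σ with
  | nil => simp [ins]
  | cons x t ih =>
    have ih' := ih (fun y hy => h y (List.mem_cons_of_mem _ hy))
    by_cases hx : x = v
    · subst hx
      rw [List.count_cons_self, List.range_succ_eq_map, List.map_cons]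
      have hpe0 : pe x (x :: t) 0 = t.countP (fun y => decide (y < x)) := by
        simp [pe]
      have hfil : (x :: t).filter (fun y => decide (y < x)) = t.filter (fun y => decide (y < x)) := by
        rw [List.filter_cons_of_neg (by simp)]
      have hmap : (List.map (· + 1) (List.range (t.count x))).map (pe x (x :: t))
          = (List.range (t.count x)).map (pe x t) := by
        rw [List.map_map]
        apply List.map_congr_left
        intro s _
        simp [pe, Function.comp]
      rw [hpe0, hfil, hmap, ins]
      have hlen : (t.filter (fun y => decide (y < x))).length
          = t.countP (fun y => decide (y < x)) := by
        rw [← List.countP_eq_length_filter]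
      rw [if_pos (le_of_eq hlen)]
      rw [ih']
    · have hxlt : x < v := lt_of_le_of_ne (h x (List.mem_cons_self)) hx
      rw [List.count_cons_of_ne hx]
      have hmap : (List.range (t.count v)).map (pe v (x :: t))
          = (List.range (t.count v)).map (pe v t) := by
        apply List.map_congr_left
        intro s _
        simp [pe, if_neg hx]
      have hfil : (x :: t).filter (fun y => decide (y < v))
          = x :: t.filter (fun y => decide (y < v)) := by
        rw [List.filter_cons_of_pos (by simpa using hxlt)]
      rw [hmap, hfil]
      rcases Nat.eq_zero_or_pos (t.count v) with h0 | hpos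
    /- empty counts -/
      · rw [h0]
        simp only [List.range_zero, List.map_nil, ins]
        have hvnot : v ∉ t := List.count_eq_zero.mp h0
        rw [List.filter_eq_self.mpr]
        intro a ha
        have h1 := h a (List.mem_cons_of_mem _ ha)
        have h2 : a ≠ v := fun hh => hvnot (hh ▸ ha)
        simpa using lt_of_le_of_ne h1 h2
      · obtain ⟨k, hk⟩ : ∃ k, t.count v = k + 1 := ⟨t.count v - 1, by omega⟩
        rw [hk, List.range_succ_eq_map, List.map_cons, ins]
        have hc0 : pe v t 0 ≤ (t.filter (fun y => decide (y < v))).length := by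
          rw [← List.countP_eq_length_filter]
          exact pe_le_countP v t 0
        rw [if_neg (by simp only [List.length_cons]; omega)]
        simp only [List.headD_cons, List.tail_cons]
        rw [← List.map_cons, ← List.range_succ_eq_map, ← hk, ih']

section Stmt4Aux

variable (v : ℕ → ℤ) (m : ℕ → ℕ)

lemma countP_replicate' (p : ℤ → Prop) [DecidablePred p] (n : ℕ) (b : ℤ) :
    Multiset.countP p (Multiset.replicate n b) = if p b then n else 0 := by
  induction n with
  | zero => simp
  | succ n ih =>
    rw [Multiset.replicate_succ, Multiset.countP_cons, ih]
    split <;> simp_all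

lemma sum_trim {ℓ i : ℕ} (hi : i ≤ ℓ) (f : ℕ → ℕ) :
    ∑ j ∈ Finset.range ℓ, (if j < i then f j else 0) = ∑ j ∈ Finset.range i, f j := by
  rw [← Finset.sum_subset (Finset.range_subset_range.mpr hi)]
  · exact Finset.sum_congr rfl (fun j hj => if_pos (Finset.mem_range.mp hj))
  · intro j _ hj
    exact if_neg (fun hlt => hj (Finset.mem_range.mpr hlt))

lemma msum_countP {ι : Type*} (p : ℤ → Prop) [DecidablePred p] (s : Finset ι) (f : ι → Multiset ℤ) :
    Multiset.countP p (∑ i ∈ s, f i) = ∑ i ∈ s, Multiset.countP p (f i) := by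
  classical
  induction s using Finset.induction with
  | empty => simp
  | insert _ _ h ih => rw [Finset.sum_insert h, Finset.sum_insert h, Multiset.countP_add, ih]

lemma msum_count {ι : Type*} (a : ℤ) (s : Finset ι) (f : ι → Multiset ℤ) :
    Multiset.count a (∑ i ∈ s, f i) = ∑ i ∈ s, Multiset.count a (f i) := by
  classical
  induction s using Finset.induction with
  | empty => simp
  | insert _ _ h ih => rw [Finset.sum_insert h, Finset.sum_insert h, Multiset.count_add, ih]

lemma msum_card {ι : Type*} (s : Finset ι) (f : ι → Multiset ℤ) :
    Multiset.card (∑ i ∈ s, f i) = ∑ i ∈ s, Multiset.card (f i) := by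
  classical
  induction s using Finset.induction with
  | empty => simp
  | insert _ _ h ih => rw [Finset.sum_insert h, Finset.sum_insert h, Multiset.card_add, ih]

lemma sigma_countP {ℓ : ℕ} (hv : ∀ i j, i < j → j < ℓ → v i < v j)
    {σ : List ℤ} (hσ : (↑σ : Multiset ℤ) = ∑ i ∈ Finset.range ℓ, Multiset.replicate (m i) (v i))
    {i : ℕ} (hi : i < ℓ) :
    σ.countP (fun y => decide (y < v i)) = ∑ j ∈ Finset.range i, m j := by
  have h1 : Multiset.countP (fun y => y < v i) (↑σ : Multiset ℤ)
      = σ.countP (fun y => decide (y < v i)) := Multiset.coe_countP _ _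
  rw [← h1, hσ, msum_countP]
  rw [← sum_trim (le_of_lt hi) m]
  apply Finset.sum_congr rfl
  intro j hj
  rw [countP_replicate']
  congr 1
  simp only [Finset.mem_range] at hj
  by_cases hji : j < i
  · simp [hji, hv j i hji hi]
  · have : ¬ v j < v i := by
      rcases Nat.lt_or_ge i j with h'|h'
      · have := hv i j h' hj; omega
      · have : j = i := by omega
        subst this; omega
    simp [hji, this]

lemma sigma_count {ℓ : ℕ} (hv : ∀ i j, i < j → j < ℓ → v i < v j)
    {σ : List ℤ} (hσ : (↑σ : Multiset ℤ) = ∑ i ∈ Finset.range ℓ, Multiset.replicate (m i) (v i))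
    {i : ℕ} (hi : i < ℓ) : σ.count (v i) = m i := by
  have h1 : Multiset.count (v i) (↑σ : Multiset ℤ) = σ.count (v i) := Multiset.coe_count _ _
  rw [← h1, hσ, msum_count]
  have : ∀ j ∈ Finset.range ℓ, Multiset.count (v i) (Multiset.replicate (m j) (v j))
      = if j = i then m j else 0 := by
    intro j hj
    rw [Multiset.count_replicate]
    simp only [Finset.mem_range] at hj
    congr 1
    by_cases hji : j = i
    · simp [hji]
    · have : v j ≠ v i := by
        rcases Nat.lt_or_ge j i with h'|h'
        · have := hv j i h' hi; omega
        · have : i < j := by omega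
          have := hv i j this hj; omega
      simp [hji, this]
  rw [Finset.sum_congr rfl this, Finset.sum_ite_eq' (Finset.range ℓ) i m]
  rw [if_pos (Finset.mem_range.mpr hi)]

lemma sigma_mem {ℓ : ℕ}
    {σ : List ℤ} (hσ : (↑σ : Multiset ℤ) = ∑ i ∈ Finset.range ℓ, Multiset.replicate (m i) (v i))
    {x : ℤ} (hx : x ∈ σ) : ∃ j < ℓ, x = v j := by
  have : x ∈ (↑σ : Multiset ℤ) := hx
  rw [hσ, Multiset.mem_sum] at this
  obtain ⟨j, hj, hmem⟩ := this
  exact ⟨j, Finset.mem_range.mp hj, Multiset.eq_of_mem_replicate hmem⟩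

lemma sigma_length {ℓ : ℕ}
    {σ : List ℤ} (hσ : (↑σ : Multiset ℤ) = ∑ i ∈ Finset.range ℓ, Multiset.replicate (m i) (v i)) :
    σ.length = ∑ j ∈ Finset.range ℓ, m j := by
  have := congrArg Multiset.card hσ
  rw [Multiset.coe_card, msum_card] at this
  simpa using this

/-- Inverse map: insert ranks one at a time. -/
def buildPhi (ℓ : ℕ) (x : List (List ℕ)) : List ℤ :=
  ((List.range ℓ).drop 1).foldl (fun τ i => ins (v i) (x.getD (i - 1) []) τ)
    (List.replicate (m 0) (v 0))

lemma drop_one_range_succ {ℓ : ℕ} (hl : 1 ≤ ℓ) :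
    (List.range (ℓ + 1)).drop 1 = (List.range ℓ).drop 1 ++ [ℓ] := by
  rw [List.range_succ, List.drop_append_of_le_length (by simpa using hl)]

lemma buildPhi_succ {ℓ : ℕ} (hl : 1 ≤ ℓ) (x : List (List ℕ)) :
    buildPhi v m (ℓ + 1) x = ins (v ℓ) (x.getD (ℓ - 1) []) (buildPhi v m ℓ x) := by
  unfold buildPhi
  rw [drop_one_range_succ hl, List.foldl_append]
  rfl

lemma buildPhi_congr {ℓ : ℕ} {x y : List (List ℕ)}
    (h : ∀ i, 1 ≤ i → i < ℓ → x.getD (i - 1) [] = y.getD (i - 1) []) :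
    buildPhi v m ℓ x = buildPhi v m ℓ y := by
  induction ℓ with
  | zero => rfl
  | succ n ih =>
    rcases Nat.eq_zero_or_pos n with rfl | hn
    · rfl
    · rw [buildPhi_succ v m hn, buildPhi_succ v m hn,
        ih (fun i h1 h2 => h i h1 (by omega)), h n hn (by omega)]

lemma buildPhi_spec {ℓ : ℕ} (hl : 1 ≤ ℓ) (hv : ∀ i j, i < j → j < ℓ → v i < v j)
    {x : List (List ℕ)}
    (hx : ∀ i, 1 ≤ i → i < ℓ → (x.getD (i - 1) []).length = m i ∧
      List.Chain' (· ≥ ·) (x.getD (i - 1) []) ∧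
      ∀ y ∈ x.getD (i - 1) [], y ≤ ∑ j ∈ Finset.range i, m j) :
    (↑(buildPhi v m ℓ x) : Multiset ℤ) = ∑ i ∈ Finset.range ℓ, Multiset.replicate (m i) (v i) ∧
    ∀ i, 1 ≤ i → i < ℓ → ∀ s, pe (v i) (buildPhi v m ℓ x) s = (x.getD (i - 1) []).getD s 0 := by
  induction ℓ, hl using Nat.le_induction with
  | base =>
    constructor
    · show (↑(List.replicate (m 0) (v 0)) : Multiset ℤ) = _
      rw [Multiset.coe_replicate, Finset.sum_range_one]
    · intro i h1 h2; omega
  | succ ℓ hl ih =>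
    obtain ⟨hA, hB⟩ := ih (fun i j hij hj => hv i j hij (by omega))
      (fun i h1 h2 => hx i h1 (by omega))
    set τ := buildPhi v m ℓ x with hτdef
    set cs := x.getD (ℓ - 1) [] with hcsdef
    have hph := buildPhi_succ v m hl x
    have hτlt : ∀ y ∈ τ, y < v ℓ := by
      intro y hy
      obtain ⟨j, hj, rfl⟩ := sigma_mem v m hA hy
      exact hv j ℓ hj (by omega)
    have hτlen : τ.length = ∑ j ∈ Finset.range ℓ, m j := sigma_length v m hA
    obtain ⟨hlen, hchain, hbound⟩ := hx ℓ hl (by omega)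
    have hb : ∀ c ∈ cs, c ≤ τ.length := by
      intro c hc; rw [hτlen]; exact hbound c hc
    have hmono : cs.Pairwise (· ≥ ·) := List.isChain_iff_pairwise.mp hchain
    constructor
    · rw [hph]
      have : (↑(ins (v ℓ) cs τ) : Multiset ℤ) = ↑(List.replicate cs.length (v ℓ) ++ τ) :=
        Multiset.coe_eq_coe.mpr (ins_perm _ _ _)
      rw [this, ← Multiset.coe_add, Multiset.coe_replicate, hlen, hA,
        Finset.sum_range_succ, add_comm]
    · intro i h1 h2 s
      rcases Nat.lt_or_ge i ℓ with hi | hi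
      · rw [hph, pe_ins_lt (v i) (v ℓ) (hv i ℓ hi (by omega))]
        exact hB i h1 hi s
      · have : i = ℓ := by omega
        subst this
        rw [hph]
        exact pe_ins_self (v i) cs τ hτlt hb hmono s

lemma getD_range_map {c : List ℕ} :
    (List.range c.length).map (fun s => c.getD s 0) = c := by
  apply List.ext_getElem
  · simp
  · intro i h1 h2
    simp only [List.getElem_map, List.getElem_range]
    exact List.getD_eq_getElem c 0 h2

lemma chain'_ge_range_map (n : ℕ) (f : ℕ → ℕ) (h : ∀ s, f (s + 1) ≤ f s) :
    List.Chain' (· ≥ ·) ((List.range n).map f) := by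
  rw [List.Chain', List.isChain_iff_getElem]
  intro i hi
  simp only [List.length_map, List.length_range] at hi
  simp only [List.get_eq_getElem, List.getElem_map, List.getElem_range]
  exact h i

lemma psi_getD (ℓ : ℕ) (f : ℕ → List ℕ) {i : ℕ} (h1 : 1 ≤ i) (h2 : i < ℓ) :
    (((List.range ℓ).drop 1).map f).getD (i - 1) [] = f i := by
  have hlen : (((List.range ℓ).drop 1).map f).length = ℓ - 1 := by simp
  have hi : i - 1 < ℓ - 1 := by omega
  rw [List.getD_eq_getElem _ _ (by omega : i - 1 < (((List.range ℓ).drop 1).map f).length)]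
  simp only [List.getElem_map, List.getElem_drop, List.getElem_range]
  congr 1
  omega

/-- the forward map ψ -/
def psiMap (ℓ : ℕ) (σ : List ℤ) : List (List ℕ) :=
  ((List.range ℓ).drop 1).map
    (fun i => (List.range (m i)).map (fun s => psiEntry σ (v i) s))

lemma psiMap_leftinv {ℓ : ℕ} (hl : 1 ≤ ℓ) (hv : ∀ i j, i < j → j < ℓ → v i < v j)
    {σ : List ℤ}
    (hσ : (↑σ : Multiset ℤ) = ∑ i ∈ Finset.range ℓ, Multiset.replicate (m i) (v i)) :
    buildPhi v m ℓ (psiMap v m ℓ σ) = σ := by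
  induction ℓ, hl using Nat.le_induction generalizing σ with
  | base =>
    have h1 : σ.length = m 0 := by
      have := sigma_length v m hσ
      simpa using this
    have h2 : ∀ b ∈ σ, b = v 0 := by
      intro b hb
      obtain ⟨j, hj, rfl⟩ := sigma_mem v m hσ hb
      have : j = 0 := by omega
      subst this; rfl
    have : σ = List.replicate (m 0) (v 0) := List.eq_replicate_iff.mpr ⟨h1, h2⟩
    rw [this]
    rfl
  | succ ℓ hl ih =>
    have hmem : ∀ y ∈ σ, ∃ j < ℓ + 1, y = v j := fun y hy => sigma_mem v m hσ hy
    have hle : ∀ y ∈ σ, y ≤ v ℓ := by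
      intro y hy
      obtain ⟨j, hj, rfl⟩ := hmem y hy
      rcases Nat.lt_or_ge j ℓ with h' | h'
      · exact le_of_lt (hv j ℓ h' (by omega))
      · have : j = ℓ := by omega
        subst this; rfl
    have hcount : σ.count (v ℓ) = m ℓ := sigma_count v m hv hσ (by omega)
    set σ' := σ.filter (fun y => decide (y < v ℓ)) with hσ'def
    have crec : ins (v ℓ) ((List.range (m ℓ)).map (pe (v ℓ) σ)) σ' = σ := by
      rw [← hcount]
      exact ins_reconstruct (v ℓ) σ hle
    -- multiset of σ'
    have hσ'mult : (↑σ' : Multiset ℤ) = ∑ i ∈ Finset.range ℓ, Multiset.replicate (m i) (v i) := by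
      have h1 : (↑σ : Multiset ℤ)
          = Multiset.replicate (m ℓ) (v ℓ) + (↑σ' : Multiset ℤ) := by
        conv_lhs => rw [← crec]
        rw [Multiset.coe_eq_coe.mpr (ins_perm _ _ _), ← Multiset.coe_add,
          Multiset.coe_replicate]
        simp
      have h2 : (↑σ : Multiset ℤ)
          = Multiset.replicate (m ℓ) (v ℓ) + ∑ i ∈ Finset.range ℓ, Multiset.replicate (m i) (v i) := by
        rw [hσ, Finset.sum_range_succ, add_comm]
      rw [h1] at h2
      exact add_left_cancel h2
    -- the "false branch" elements are exactly v ℓ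
    have hfilt : ∀ y ∈ σ, (decide (y < v ℓ) : Bool) = false → y = v ℓ := by
      intro y hy hfy
      have : ¬ y < v ℓ := by simpa using hfy
      have := hle y hy
      omega
    rw [buildPhi_succ v m hl]
    have hblock : (psiMap v m (ℓ + 1) σ).getD (ℓ - 1) []
        = (List.range (m ℓ)).map (pe (v ℓ) σ) := by
      unfold psiMap
      rw [psi_getD (ℓ + 1) _ hl (by omega)]
      exact List.map_congr_left (fun s _ => psiEntry_eq_pe (v ℓ) σ s)
    rw [hblock]
    have hcongr : buildPhi v m ℓ (psiMap v m (ℓ + 1) σ) = buildPhi v m ℓ (psiMap v m ℓ σ') := by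
      apply buildPhi_congr
      intro i h1 h2
      unfold psiMap
      rw [psi_getD (ℓ + 1) _ h1 (by omega), psi_getD ℓ _ h1 h2]
      apply List.ext_getElem (by simp)
      intro k hk1 hk2
      simp only [List.getElem_map, List.getElem_range]
      rw [psiEntry_eq_pe, psiEntry_eq_pe]
      refine (pe_filter (v i) _ σ k ?_).symm
      intro y hy hfy
      have hyv : y = v ℓ := hfilt y hy hfy
      have hvi : v i < v ℓ := hv i ℓ h2 (by omega)
      subst hyv
      constructor <;> omega
    rw [hcongr, ih (fun a b hab hb => hv a b hab (by omega)) hσ'mult]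
    exact crec

lemma psiMap_rightinv {ℓ : ℕ} (hl : 1 ≤ ℓ) (hv : ∀ i j, i < j → j < ℓ → v i < v j)
    {x : List (List ℕ)} (hxlen : x.length = ℓ - 1)
    (hx : ∀ i, 1 ≤ i → i < ℓ → (x.getD (i - 1) []).length = m i ∧
      List.Chain' (· ≥ ·) (x.getD (i - 1) []) ∧
      ∀ y ∈ x.getD (i - 1) [], y ≤ ∑ j ∈ Finset.range i, m j) :
    psiMap v m ℓ (buildPhi v m ℓ x) = x := by
  obtain ⟨hA, hB⟩ := buildPhi_spec v m hl hv hx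
  apply List.ext_getElem
  · simp [psiMap, hxlen]
  · intro k hk1 hk2
    have hkl : k < ℓ - 1 := by
      simpa [psiMap] using hk1
    set i := k + 1 with hidef
    have h1 : 1 ≤ i := by omega
    have h2 : i < ℓ := by omega
    simp only [psiMap]
    simp only [List.getElem_map, List.getElem_drop, List.getElem_range]
    have : (List.range (m (1 + k))).map (fun s => psiEntry (buildPhi v m ℓ x) (v (1 + k)) s)
        = x.getD (i - 1) [] := by
      have hik : 1 + k = i := by omega
      rw [hik]
      obtain ⟨hlen, _, _⟩ := hx i h1 h2
      calc (List.range (m i)).map (fun s => psiEntry (buildPhi v m ℓ x) (v i) s)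
          = (List.range (m i)).map (fun s => (x.getD (i - 1) []).getD s 0) := by
            apply List.map_congr_left
            intro s _
            rw [psiEntry_eq_pe]
            exact hB i h1 h2 s
        _ = x.getD (i - 1) [] := by rw [← hlen]; exact getD_range_map
    rw [this]
    rw [List.getD_eq_getElem x [] (by omega : i - 1 < x.length)]
    congr 1

lemma psiMap_mapsto {ℓ : ℕ} (hv : ∀ i j, i < j → j < ℓ → v i < v j)
    {σ : List ℤ}
    (hσ : (↑σ : Multiset ℤ) = ∑ i ∈ Finset.range ℓ, Multiset.replicate (m i) (v i)) :
    (psiMap v m ℓ σ).length = ℓ - 1 ∧ ∀ i, 1 ≤ i → i < ℓ →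
      ((psiMap v m ℓ σ).getD (i - 1) []).length = m i ∧
      List.Chain' (· ≥ ·) ((psiMap v m ℓ σ).getD (i - 1) []) ∧
      ∀ y ∈ (psiMap v m ℓ σ).getD (i - 1) [], y ≤ ∑ j ∈ Finset.range i, m j := by
  constructor
  · simp [psiMap]
  · intro i h1 h2
    unfold psiMap
    rw [psi_getD ℓ _ h1 h2]
    have hbridge : (List.range (m i)).map (fun s => psiEntry σ (v i) s)
        = (List.range (m i)).map (fun s => pe (v i) σ s) :=
      List.map_congr_left (fun s _ => psiEntry_eq_pe (v i) σ s)
    rw [hbridge]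
    refine ⟨by simp, chain'_ge_range_map _ _ (fun s => pe_succ_le (v i) σ s), ?_⟩
    intro y hy
    simp only [List.mem_map, List.mem_range] at hy
    obtain ⟨s, _, rfl⟩ := hy
    calc pe (v i) σ s ≤ σ.countP (fun y => decide (y < v i)) := pe_le_countP _ _ _
      _ = ∑ j ∈ Finset.range i, m j := sigma_countP v m hv hσ h2

end Stmt4Aux


/-- Lemma 4. Let `M = {v 0 ^ m 0, …, v (ℓ-1) ^ m (ℓ-1)}` with distinct ranks
`v 0 < … < v (ℓ-1)` and positive multiplicities, and let `n_i = m 0 + … + m (i-1)`.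
The mapping `ψ : S(M) → [Z]^M`, sending `σ` to the tuple of blocks
`x_i = (x_{i,1}, …, x_{i,m_i})` for `i = 1, …, ℓ-1` (paper indices `2, …, ℓ`), where
`x_{i,s}` counts the elements smaller than `v i` to the right of the `s`-th occurrence of
`v i` in `σ`, is a bijection onto
`[Z]^M = [Z_{n_1+1}]^{m_2} × … × [Z_{n_{ℓ-1}+1}]^{m_ℓ}` (each block being a monotone
non-increasing vector of length `m i` with entries in `{0, …, n_i}`). -/
theorem stmt4 (ℓ : ℕ) (v : ℕ → ℤ) (m : ℕ → ℕ)
    (hv : ∀ i j, i < j → j < ℓ → v i < v j)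
    (hm : ∀ i, i < ℓ → 0 < m i) :
    Set.BijOn
      (fun σ => ((List.range ℓ).drop 1).map
        (fun i => (List.range (m i)).map (fun s => psiEntry σ (v i) s)))
      {σ : List ℤ | (↑σ : Multiset ℤ) = ∑ i ∈ Finset.range ℓ, Multiset.replicate (m i) (v i)}
      {x : List (List ℕ) | x.length = ℓ - 1 ∧ ∀ i, 1 ≤ i → i < ℓ →
        (x.getD (i - 1) []).length = m i ∧
        List.Chain' (· ≥ ·) (x.getD (i - 1) []) ∧
        ∀ y ∈ x.getD (i - 1) [], y ≤ ∑ j ∈ Finset.range i, m j} := by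
  rcases Nat.eq_zero_or_pos ℓ with rfl | hl
  · constructor
    · intro σ hσ
      simp only [Set.mem_setOf_eq, Finset.range_zero, Finset.sum_empty] at hσ
      constructor
      · simp
      · intro i h1 h2; omega
    constructor
    · intro σ1 h1 σ2 h2 _
      simp only [Set.mem_setOf_eq, Finset.range_zero, Finset.sum_empty,
        Multiset.coe_eq_zero] at h1 h2
      rw [h1, h2]
    · intro x hx
      simp only [Set.mem_setOf_eq] at hx
      have : x = [] := List.length_eq_zero_iff.mp (by omega)
      subst this
      refine ⟨[], by simp, rfl⟩
  · have hST : Set.InvOn (buildPhi v m ℓ)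
        (fun σ => ((List.range ℓ).drop 1).map
          (fun i => (List.range (m i)).map (fun s => psiEntry σ (v i) s)))
        {σ : List ℤ | (↑σ : Multiset ℤ) = ∑ i ∈ Finset.range ℓ, Multiset.replicate (m i) (v i)}
        {x : List (List ℕ) | x.length = ℓ - 1 ∧ ∀ i, 1 ≤ i → i < ℓ →
          (x.getD (i - 1) []).length = m i ∧
          List.Chain' (· ≥ ·) (x.getD (i - 1) []) ∧
          ∀ y ∈ x.getD (i - 1) [], y ≤ ∑ j ∈ Finset.range i, m j} := by
      constructor
      · intro σ hσ
        exact psiMap_leftinv v m hl hv hσ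
      · intro x hx
        exact psiMap_rightinv v m hl hv hx.1 hx.2
    apply hST.bijOn
    · intro σ hσ
      exact psiMap_mapsto v m hv hσ
    · intro x hx
      exact (buildPhi_spec v m hl hv hx.2).1
end

section
/- For every positive integer N, the code C_L = { x ∈ (Z_{2N+1})^N : Σ_{i=1}^{N} i·x_i ≡ 0 (mod 2N+1) } is a perfect linear single-error-correcting code in (Z_{2N+1})^N with the Lee metric; that is, the balls of Lee radius 1 around the codewords of C_L partition (Z_{2N+1})^N. -/
section aux
variable {q : ℕ} [NeZero q]

lemma leeAbs_eq_natAbs (a : ZMod q) : min a.val (-a).val = a.valMinAbs.natAbs := by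
  rcases eq_or_ne a 0 with rfl | h
  · simp
  · have hv : a.val < q := ZMod.val_lt a
    have hv0 : a.val ≠ 0 := fun hh => h ((ZMod.val_eq_zero a).mp hh)
    rw [ZMod.neg_val, if_neg h, ZMod.valMinAbs_def_pos]
    split_ifs with h2
    · rw [Int.natAbs_natCast]; omega
    · have h3 : ((a.val : ℤ) - q).natAbs = q - a.val := by omega
      rw [h3]; omega

lemma lee_tri (a b : ZMod q) :
    min ((a+b).val) ((-(a+b)).val) ≤ min a.val (-a).val + min b.val (-b).val := by
  rw [leeAbs_eq_natAbs, leeAbs_eq_natAbs, leeAbs_eq_natAbs]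
  exact (ZMod.natAbs_valMinAbs_add_le a b).trans (Int.natAbs_add_le _ _)

end aux

lemma key (N : ℕ) (v : Fin N → ZMod (2*N+1))
    (hs : ∑ i : Fin N, ((i.val + 1 : ℕ) : ZMod (2*N+1)) * v i = 0)
    (hw : ∑ i : Fin N, min ((v i).val) ((-(v i)).val) ≤ 2) : v = 0 := by
  haveI : NeZero (2*N+1) := ⟨by omega⟩
  set m : Fin N → ℤ := fun i => (v i).valMinAbs with hm
  have hwt : ∑ i : Fin N, (m i).natAbs ≤ 2 := by
    calc ∑ i : Fin N, (m i).natAbs = ∑ i : Fin N, min ((v i).val) ((-(v i)).val) := by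
          refine Finset.sum_congr rfl fun i _ => (leeAbs_eq_natAbs (v i)).symm
      _ ≤ 2 := hw
  set S : ℤ := ∑ i : Fin N, ((i.val : ℤ) + 1) * m i with hSdef
  have hScast : ((S : ℤ) : ZMod (2*N+1)) = 0 := by
    rw [hSdef]
    push_cast
    simpa [hm] using hs
  have hwtZ : ∑ i : Fin N, |m i| ≤ (2 : ℤ) := by
    have he : ∑ i : Fin N, |m i| = ((∑ i : Fin N, (m i).natAbs : ℕ) : ℤ) := by
      rw [Nat.cast_sum]
      exact Finset.sum_congr rfl fun i _ => (Int.natCast_natAbs _).symm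
    rw [he]; exact_mod_cast hwt
  have hSbound : |S| ≤ (2 * N : ℤ) := by
    calc |S| ≤ ∑ i : Fin N, |((i.val : ℤ) + 1) * m i| :=
          Finset.abs_sum_le_sum_abs _ _
      _ ≤ ∑ i : Fin N, (N : ℤ) * |m i| := by
          refine Finset.sum_le_sum fun i _ => ?_
          rw [abs_mul]
          have h1 : |(i.val : ℤ) + 1| ≤ (N : ℤ) := by
            have := i.isLt
            rw [abs_of_nonneg (by positivity)]
            exact_mod_cast Nat.succ_le_of_lt this
          exact mul_le_mul_of_nonneg_right h1 (abs_nonneg _)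
      _ = (N : ℤ) * ∑ i : Fin N, |m i| := by rw [Finset.mul_sum]
      _ ≤ (N : ℤ) * 2 := by
          exact mul_le_mul_of_nonneg_left hwtZ (by positivity)
      _ = (2 * N : ℤ) := by ring
  have hS0 : S = 0 := by
    have hdvd : ((2*N+1 : ℕ) : ℤ) ∣ S := (ZMod.intCast_zmod_eq_zero_iff_dvd _ _).mp hScast
    obtain ⟨k, hk⟩ := hdvd
    rcases eq_or_ne k 0 with rfl | hk0
    · simp [hk]
    · exfalso
      have h1 : (1 : ℤ) ≤ |k| := Int.one_le_abs (by exact_mod_cast hk0)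
      have h2 : |S| = ((2*N+1 : ℕ) : ℤ) * |k| := by
        rw [hk, abs_mul, abs_of_nonneg (by positivity)]
      have : ((2*N+1 : ℕ) : ℤ) ≤ |S| := by
        rw [h2]; nlinarith [(by positivity : (0:ℤ) ≤ ((2*N+1:ℕ):ℤ))]
      have hq : ((2*N+1 : ℕ) : ℤ) = 2*N+1 := by push_cast; ring
      omega
  funext i
  by_contra hvi
  have hvi' : v i ≠ 0 := fun hh => hvi (by simp [hh])
  have hmi : m i ≠ 0 := fun hh => hvi' ((ZMod.valMinAbs_eq_zero (v i)).mp hh)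
  set T : Finset (Fin N) := Finset.univ.filter (fun i => m i ≠ 0) with hT
  have hiT : i ∈ T := by simp [hT, hmi]
  have hST : S = ∑ j ∈ T, ((j.val : ℤ) + 1) * m j := by
    rw [hSdef, hT]
    exact (Finset.sum_filter_of_ne (fun x _ hx => by
      intro h0; apply hx; rw [h0, mul_zero])).symm
  have hwtT : ∑ j ∈ T, (m j).natAbs ≤ 2 := by
    refine le_trans ?_ hwt
    exact Finset.sum_le_sum_of_subset (Finset.filter_subset _ _)
  have hmem : ∀ j ∈ T, 1 ≤ (m j).natAbs := by
    intro j hj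
    rw [hT, Finset.mem_filter] at hj
    exact Int.natAbs_pos.mpr hj.2
  have hcard : T.card ≤ 2 := by
    have h1 : T.card • 1 ≤ ∑ j ∈ T, (m j).natAbs :=
      Finset.card_nsmul_le_sum T _ 1 hmem
    simpa using h1.trans hwtT
  have hcard1 : 1 ≤ T.card := Finset.card_pos.mpr ⟨i, hiT⟩
  interval_cases h : T.card
  · -- card = 1
    obtain ⟨k, hk⟩ := Finset.card_eq_one.mp h
    have hik : i = k := by
      have := hiT; rw [hk, Finset.mem_singleton] at this; exact this
    rw [hk, Finset.sum_singleton] at hST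
    have hmk : m k ≠ 0 := hik ▸ hmi
    have : ((k.val : ℤ) + 1) * m k = 0 := hST ▸ hS0
    rcases mul_eq_zero.mp this with h' | h'
    · omega
    · exact hmk h'
  · -- card = 2
    obtain ⟨k, l, hkl, hT2⟩ := Finset.card_eq_two.mp h
    have hmk : m k ≠ 0 := by
      have : k ∈ T := by rw [hT2]; exact Finset.mem_insert_self _ _
      rw [hT, Finset.mem_filter] at this; exact this.2
    have hml : m l ≠ 0 := by
      have : l ∈ T := by rw [hT2]; simp
      rw [hT, Finset.mem_filter] at this; exact this.2
    rw [hT2, Finset.sum_pair hkl] at hST hwtT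
    have hk1 : (m k).natAbs = 1 := by
      have := Int.natAbs_pos.mpr hmk; have := Int.natAbs_pos.mpr hml; omega
    have hl1 : (m l).natAbs = 1 := by
      have := Int.natAbs_pos.mpr hmk; have := Int.natAbs_pos.mpr hml; omega
    have hkv : m k = 1 ∨ m k = -1 := by
      rcases Int.natAbs_eq (m k) with h' | h' <;> rw [hk1] at h' <;> [left; right] <;> omega
    have hlv : m l = 1 ∨ m l = -1 := by
      rcases Int.natAbs_eq (m l) with h' | h' <;> rw [hl1] at h' <;> [left; right] <;> omega
    have hklv : k.val ≠ l.val := fun hh => hkl (Fin.ext hh)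
    have hEq : ((k.val : ℤ) + 1) * m k + ((l.val : ℤ) + 1) * m l = 0 := hST ▸ hS0
    rcases hkv with h' | h' <;> rcases hlv with h'' | h'' <;> rw [h', h''] at hEq <;> omega

lemma wt_single {q : ℕ} {N : ℕ} (j : Fin N) (c : ZMod q) :
    ∑ i : Fin N, min ((if i = j then c else 0 : ZMod q).val)
      ((-(if i = j then c else 0 : ZMod q)).val) = min c.val (-c).val := by
  rw [Finset.sum_congr rfl (fun i _ => show _ = if i = j then min c.val (-c).val else 0 by
    split_ifs with h <;> simp)]
  simp

lemma synd_single {q N : ℕ} (j : Fin N) (c : ZMod q) :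
    ∑ i : Fin N, ((i.val+1:ℕ) : ZMod q) * (if i = j then c else 0)
      = ((j.val+1:ℕ) : ZMod q) * c := by
  rw [Finset.sum_congr rfl (fun i _ =>
    show _ = if i = j then ((i.val+1:ℕ):ZMod q) * c else 0 by split_ifs with h <;> simp)]
  simp

/-- Theorem 2, Golomb–Welch. For every positive integer `N`, the code
`C_L = {x ∈ (Z_{2N+1})^N : ∑ i·x_i ≡ 0 (mod 2N+1)}` is a perfect linear
single-error-correcting code in `(Z_{2N+1})^N` with the Lee metric: it is linear, distinct
codewords are at Lee distance at least `3`, and every vector of `(Z_{2N+1})^N` is within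
Lee distance `1` of exactly one codeword. -/
theorem stmt7 (N : ℕ) (hN : 0 < N)
    (C : Set (Fin N → ZMod (2 * N + 1)))
    (hC : C = {x : Fin N → ZMod (2 * N + 1) |
      ∑ i : Fin N, ((i.val + 1 : ℕ) : ZMod (2 * N + 1)) * x i = 0}) :
    (∀ x ∈ C, ∀ y ∈ C, x + y ∈ C) ∧
    (∀ a : ZMod (2 * N + 1), ∀ x ∈ C, a • x ∈ C) ∧
    (∀ x ∈ C, ∀ y ∈ C, x ≠ y → 3 ≤ zmodLee x y) ∧
    (∀ y : Fin N → ZMod (2 * N + 1), ∃! c, c ∈ C ∧ zmodLee c y ≤ 1) := by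
  subst hC
  haveI : NeZero (2*N+1) := ⟨by omega⟩
  haveI : Fact (1 < 2*N+1) := ⟨by omega⟩
  refine ⟨?_, ?_, ?_, ?_⟩
  · intro x hx y hy
    simp only [Set.mem_setOf_eq] at *
    simp only [Pi.add_apply, mul_add, Finset.sum_add_distrib, hx, hy, add_zero]
  · intro a x hx
    simp only [Set.mem_setOf_eq] at *
    simp only [Pi.smul_apply, smul_eq_mul, mul_left_comm, ← Finset.mul_sum, hx, mul_zero]
  · intro x hx y hy hxy
    simp only [Set.mem_setOf_eq] at hx hy
    by_contra hlt
    push_neg at hlt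
    have hle : zmodLee x y ≤ 2 := by omega
    have hsynd : ∑ i : Fin N, ((i.val+1:ℕ) : ZMod (2*N+1)) * (x - y) i = 0 := by
      simp only [Pi.sub_apply, mul_sub, Finset.sum_sub_distrib, hx, hy, sub_zero]
    have hw : ∑ i : Fin N, min (((x-y) i).val) ((-((x-y) i)).val) ≤ 2 := by
      simpa [zmodLee, Pi.sub_apply, neg_sub] using hle
    exact hxy (sub_eq_zero.mp (key N (x - y) hsynd hw))
  · intro y
    set s := ∑ i : Fin N, ((i.val+1:ℕ) : ZMod (2*N+1)) * y i with hsdef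
    obtain ⟨e, hwte, hse⟩ : ∃ e : Fin N → ZMod (2*N+1),
        (∑ i : Fin N, min ((e i).val) ((-(e i)).val) ≤ 1) ∧
        (∑ i : Fin N, ((i.val+1:ℕ) : ZMod (2*N+1)) * e i = s) := by
      rcases eq_or_ne s 0 with hs0 | hs0
      · exact ⟨0, by simp, by simpa using hs0.symm⟩
      · have ht1 : 1 ≤ s.val := Nat.one_le_iff_ne_zero.mpr
          (fun h => hs0 ((ZMod.val_eq_zero s).mp h))
        have ht2 : s.val < 2*N+1 := ZMod.val_lt s
        have hval : ((s.val : ℕ) : ZMod (2*N+1)) = s := by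
          rw [ZMod.natCast_val, ZMod.cast_id]
        by_cases hle : s.val ≤ N
        · refine ⟨fun i => if i = ⟨s.val - 1, by omega⟩ then 1 else 0, ?_, ?_⟩
          · rw [wt_single]
            exact le_trans (min_le_left _ _) (by rw [ZMod.val_one])
          · rw [synd_single, mul_one]
            rw [show (s.val - 1 + 1 : ℕ) = s.val by omega] at *
            exact hval
        · refine ⟨fun i => if i = ⟨2*N - s.val, by omega⟩ then -1 else 0, ?_, ?_⟩
          · rw [wt_single, neg_neg]
            exact le_trans (min_le_right _ _) (by rw [ZMod.val_one])
          · rw [synd_single]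
            have h1 : (2*N - s.val + 1 : ℕ) = 2*N+1 - s.val := by omega
            rw [h1, Nat.cast_sub (by omega), ZMod.natCast_self, hval]
            ring
    refine ⟨y - e, ⟨?_, ?_⟩, ?_⟩
    · show ∑ i : Fin N, ((i.val+1:ℕ) : ZMod (2*N+1)) * (y - e) i = 0
      simp only [Pi.sub_apply, mul_sub, Finset.sum_sub_distrib, hse, ← hsdef, sub_self]
    · have h1 : zmodLee (y - e) y = ∑ i : Fin N, min ((e i).val) ((-(e i)).val) := by
        unfold zmodLee
        refine Finset.sum_congr rfl fun i _ => ?_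
        have e1 : (y - e) i - y i = -(e i) := by rw [Pi.sub_apply]; ring
        have e2 : y i - (y - e) i = e i := by rw [Pi.sub_apply]; ring
        rw [e1, e2, min_comm]
      rw [h1]; exact hwte
    · rintro c' ⟨hc', hlee'⟩
      simp only [Set.mem_setOf_eq] at hc'
      have hsynd : ∑ i : Fin N, ((i.val+1:ℕ) : ZMod (2*N+1)) * (c' - (y - e)) i = 0 := by
        have hye : ∑ i : Fin N, ((i.val+1:ℕ) : ZMod (2*N+1)) * (y - e) i = 0 := by
          simp only [Pi.sub_apply, mul_sub, Finset.sum_sub_distrib, hse, ← hsdef, sub_self]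
        simp only [Pi.sub_apply, mul_sub, Finset.sum_sub_distrib, hc']
        simpa only [Pi.sub_apply, mul_sub, Finset.sum_sub_distrib, zero_sub, neg_eq_zero]
          using hye
      have hw2 : ∑ i : Fin N, min (((c' - (y - e)) i).val) ((-((c' - (y - e)) i)).val) ≤ 2 := by
        have hstep : ∀ i : Fin N,
            min (((c' - (y - e)) i).val) ((-((c' - (y - e)) i)).val) ≤
              min ((c' i - y i).val) ((-(c' i - y i)).val)
                + min ((e i).val) ((-(e i)).val) := by
          intro i
          have hd : (c' - (y - e)) i = (c' i - y i) + e i := by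
            simp only [Pi.sub_apply]; ring
          rw [hd]
          exact lee_tri _ _
        calc ∑ i : Fin N, min (((c' - (y - e)) i).val) ((-((c' - (y - e)) i)).val)
            ≤ ∑ i : Fin N, (min ((c' i - y i).val) ((-(c' i - y i)).val)
                + min ((e i).val) ((-(e i)).val)) := Finset.sum_le_sum fun i _ => hstep i
          _ = zmodLee c' y + ∑ i : Fin N, min ((e i).val) ((-(e i)).val) := by
              rw [Finset.sum_add_distrib]
              congr 1
              refine Finset.sum_congr rfl fun i _ => ?_
              rw [neg_sub]
          _ ≤ 1 + 1 := add_le_add hlee' hwte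
          _ = 2 := rfl
      exact sub_eq_zero.mp (key N _ hsynd hw2)
end
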